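/- Assume all rewards r(i,a,j) are nonnegative and let V_max = (max_π ‖r_π‖_∞)/(1−γ). Let (π_k) be a sequence of policies generated by Howard's PI from any initial policy π_0. Then for every ε > 0 and every index k with k ≥ (1/(1−γ)) log(V_max/ε) at which π_k is defined, the policy π_k is ε-optimal: ‖v_* − v_{π_k}‖_∞ ≤ ε. -/

import Mathlib

open Matrix BigOperators

/-- A finite discounted MDP with `n ≥ 1` states and `m ≥ 2` actions:
transition probabilities `p i a j`, rewards `r i a j`, discount factor `γ ∈ (0,1)`. -/
structure MDP (n m : ℕ) : Type where
  n_pos : 1 ≤ n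
  m_ge_two : 2 ≤ m
  p : Fin n → Fin m → Fin n → ℝ
  r : Fin n → Fin m → Fin n → ℝ
  γ : ℝ
  p_nonneg : ∀ i a j, 0 ≤ p i a j
  p_sum : ∀ i a, ∑ j, p i a j = 1
  γ_pos : 0 < γ
  γ_lt_one : γ < 1

/-- A (stationary deterministic) policy. -/
abbrev MDP.Policy (n m : ℕ) : Type := Fin n → Fin m

namespace MDP

variable {n m : ℕ}

/-- The row-stochastic transition matrix `P_π` of a policy. -/
def P (M : MDP n m) (π : Policy n m) : Matrix (Fin n) (Fin n) ℝ :=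
  Matrix.of fun i j => M.p i (π i) j

/-- The expected reward vector `r_π` of a policy. -/
def rPol (M : MDP n m) (π : Policy n m) : Fin n → ℝ :=
  fun i => ∑ j, M.p i (π i) j * M.r i (π i) j

/-- The Bellman operator `T_π v = r_π + γ P_π v` of a policy. -/
def Tpol (M : MDP n m) (π : Policy n m) (v : Fin n → ℝ) : Fin n → ℝ :=
  fun i => M.rPol π i + M.γ * (M.P π *ᵥ v) i

/-- `IsValue M V` asserts that, for every policy `π`, `V π` is the value function `v_π`,
i.e. the (unique) solution of the Bellman equation `v_π = T_π v_π`. -/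
def IsValue (M : MDP n m) (V : Policy n m → Fin n → ℝ) : Prop :=
  ∀ π, V π = M.Tpol π (V π)

/-- The optimal Bellman operator `T v = max_π T_π v` (componentwise maximum). -/
noncomputable def T (M : MDP n m) (v : Fin n → ℝ) : Fin n → ℝ :=
  fun i => ⨆ π : Policy n m, M.Tpol π v i

/-- The optimal value function `v_*`, the componentwise maximum of `v_π` over policies. -/
noncomputable def vStar (M : MDP n m) (V : Policy n m → Fin n → ℝ) : Fin n → ℝ :=
  fun i => ⨆ π : Policy n m, V π i

/-- A policy is optimal when its value equals `v_*`. -/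
def IsOptimal (M : MDP n m) (V : Policy n m → Fin n → ℝ) (π : Policy n m) : Prop :=
  V π = M.vStar V

/-- `π'` is greedy with respect to `v_π`: `T_{π'} v_π = T v_π`.  One step of Howard's PI
from a non-optimal `π` moves to such a `π'`. -/
def Greedy (M : MDP n m) (V : Policy n m → Fin n → ℝ) (π π' : Policy n m) : Prop :=
  M.Tpol π' (V π) = M.T (V π)

/-- One step of Simplex-PI: `π'` agrees with `π` except at a single state `s` maximizing
the advantage `a_π(i) = (T v_π - v_π)(i)`, where `π'(s)` achieves `T v_π(s)`. -/
def SimplexStep (M : MDP n m) (V : Policy n m → Fin n → ℝ) (π π' : Policy n m) : Prop :=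
  ∃ s : Fin n, (∀ i, i ≠ s → π' i = π i) ∧
    (∀ i, M.T (V π) i - V π i ≤ M.T (V π) s - V π s) ∧
    M.Tpol π' (V π) s = M.T (V π) s

/-- The vector `x_π = (I - γ P_πᵀ)⁻¹ 1`. -/
noncomputable def xPol (M : MDP n m) (π : Policy n m) : Fin n → ℝ :=
  ((1 : Matrix (Fin n) (Fin n) ℝ) - M.γ • (M.P π)ᵀ)⁻¹ *ᵥ (fun _ => (1 : ℝ))

/-- `R` is a recurrent class of `π`: nonempty, closed under positive-probability
transitions of `P_π`, and every state of `R` is reachable from every other state of `R`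
along positive-probability transitions.  (For a deterministic MDP this is the notion of
a cycle of `π`.) -/
def IsRecClass (M : MDP n m) (π : Policy n m) (R : Set (Fin n)) : Prop :=
  R.Nonempty ∧ (∀ i ∈ R, ∀ j, 0 < M.P π i j → j ∈ R) ∧
    ∀ i ∈ R, ∀ j ∈ R, Relation.ReflTransGen (fun a b => 0 < M.P π a b) i j

/-- A state is recurrent for `π` if it belongs to some recurrent class of `π`. -/
def Recurrent (M : MDP n m) (π : Policy n m) (i : Fin n) : Prop :=
  ∃ R : Set (Fin n), M.IsRecClass π R ∧ i ∈ R

/-- A state is transient for `π` if it is not recurrent for `π`. -/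
def Transient (M : MDP n m) (π : Policy n m) (i : Fin n) : Prop :=
  ¬ M.Recurrent π i

/-- Assumption 1: `τ_t, τ_r ≥ 1` with `x_π(i) ≤ τ_t` for transient states and
`x_π(i) ≥ n / ((1-γ) τ_r)` for recurrent states, for every policy `π`. -/
def Ass1 (M : MDP n m) (τt τr : ℝ) : Prop :=
  1 ≤ τt ∧ 1 ≤ τr ∧
    (∀ π i, M.Transient π i → M.xPol π i ≤ τt) ∧
    (∀ π i, M.Recurrent π i → (n : ℝ) / ((1 - M.γ) * τr) ≤ M.xPol π i)

/-- Assumption 2: the state space is partitioned into a set of states transient for every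
policy and a set of states recurrent for every policy. -/
def Ass2 (M : MDP n m) : Prop :=
  ∃ 𝒯 ℛ : Set (Fin n), 𝒯 ∪ ℛ = Set.univ ∧ 𝒯 ∩ ℛ = ∅ ∧
    ∀ π : Policy n m, (∀ i ∈ 𝒯, M.Transient π i) ∧ (∀ i ∈ ℛ, M.Recurrent π i)

/-- The MDP is deterministic when every transition probability is 0 or 1. -/
def Deterministic (M : MDP n m) : Prop :=
  ∀ i a j, M.p i a j = 0 ∨ M.p i a j = 1

/-- `V_max = (max_π ‖r_π‖_∞) / (1 - γ)`. -/
noncomputable def Vmax (M : MDP n m) : ℝ :=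
  (⨆ π : Policy n m, ‖M.rPol π‖) / (1 - M.γ)

end MDP

section Aux

variable {n m : ℕ}

lemma MDPaux.nonemptyState (M : MDP n m) : Nonempty (Fin n) :=
  Fin.pos_iff_nonempty.mp M.n_pos

lemma MDPaux.nonemptyPolicy (M : MDP n m) : Nonempty (MDP.Policy n m) :=
  ⟨fun _ => ⟨0, lt_of_lt_of_le (by norm_num) M.m_ge_two⟩⟩

lemma MDPaux.mulVec_apply (M : MDP n m) (π : MDP.Policy n m) (v : Fin n → ℝ) (i : Fin n) :
    (M.P π *ᵥ v) i = ∑ j, M.p i (π i) j * v j := by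
  simp [Matrix.mulVec, dotProduct, MDP.P]

lemma MDPaux.mulVec_le (M : MDP n m) (π : MDP.Policy n m) (v : Fin n → ℝ) (c : ℝ)
    (h : ∀ j, v j ≤ c) (i : Fin n) : (M.P π *ᵥ v) i ≤ c := by
  rw [MDPaux.mulVec_apply]
  calc ∑ j, M.p i (π i) j * v j ≤ ∑ j, M.p i (π i) j * c :=
        Finset.sum_le_sum fun j _ => mul_le_mul_of_nonneg_left (h j) (M.p_nonneg _ _ _)
    _ = (∑ j, M.p i (π i) j) * c := by rw [Finset.sum_mul]
    _ = c := by rw [M.p_sum, one_mul]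

lemma MDPaux.mulVec_sub (M : MDP n m) (π : MDP.Policy n m) (a b : Fin n → ℝ) (i : Fin n) :
    (M.P π *ᵥ fun j => a j - b j) i = (M.P π *ᵥ a) i - (M.P π *ᵥ b) i := by
  simp [MDPaux.mulVec_apply, mul_sub, Finset.sum_sub_distrib]

/-- Core positivity lemma: if `w = d + γ P_π w` with `d ≥ 0`, then `w ≥ 0`. -/
lemma MDPaux.nonneg_of_eq (M : MDP n m) (π : MDP.Policy n m) (w d : Fin n → ℝ)
    (hd : ∀ i, 0 ≤ d i) (hw : ∀ i, w i = d i + M.γ * (M.P π *ᵥ w) i) :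
    ∀ i, 0 ≤ w i := by
  haveI := MDPaux.nonemptyState M
  obtain ⟨i0, -, hmin⟩ := Finset.exists_min_image Finset.univ w
    ⟨Classical.arbitrary _, Finset.mem_univ _⟩
  have hlow : w i0 ≤ (M.P π *ᵥ w) i0 := by
    rw [MDPaux.mulVec_apply]
    calc w i0 = (∑ j, M.p i0 (π i0) j) * w i0 := by rw [M.p_sum, one_mul]
      _ = ∑ j, M.p i0 (π i0) j * w i0 := Finset.sum_mul _ _ _
      _ ≤ ∑ j, M.p i0 (π i0) j * w j := Finset.sum_le_sum fun j _ =>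
          mul_le_mul_of_nonneg_left (hmin j (Finset.mem_univ j)) (M.p_nonneg _ _ _)
  have h0 : 0 ≤ w i0 := by
    have h1 := hw i0
    have h2 := hd i0
    have hγ1 := M.γ_pos
    have hγ2 := M.γ_lt_one
    nlinarith [mul_le_mul_of_nonneg_left hlow (le_of_lt M.γ_pos)]
  intro i
  exact le_trans h0 (hmin i (Finset.mem_univ i))

lemma MDPaux.Tpol_le_T (M : MDP n m) (σ : MDP.Policy n m) (v : Fin n → ℝ) (i : Fin n) :
    M.Tpol σ v i ≤ M.T v i :=
  le_ciSup (Set.Finite.bddAbove (Set.finite_range fun π => M.Tpol π v i)) σ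

lemma MDPaux.V_nonneg (M : MDP n m) (hr : ∀ i a j, 0 ≤ M.r i a j)
    (V : MDP.Policy n m → Fin n → ℝ) (hV : M.IsValue V) (π : MDP.Policy n m) :
    ∀ i, 0 ≤ V π i := by
  refine MDPaux.nonneg_of_eq M π (V π) (M.rPol π) (fun i => ?_) (fun i => ?_)
  · exact Finset.sum_nonneg fun j _ => mul_nonneg (M.p_nonneg _ _ _) (hr _ _ _)
  · exact congrFun (hV π) i

lemma MDPaux.R_nonneg (M : MDP n m) : 0 ≤ ⨆ π : MDP.Policy n m, ‖M.rPol π‖ := by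
  haveI := MDPaux.nonemptyPolicy M
  have hb : BddAbove (Set.range fun σ : MDP.Policy n m => ‖M.rPol σ‖) :=
    Set.Finite.bddAbove (Set.finite_range _)
  exact le_trans (norm_nonneg (M.rPol (Classical.arbitrary _)))
    (le_ciSup hb (Classical.arbitrary _))

lemma MDPaux.Vmax_nonneg (M : MDP n m) : 0 ≤ M.Vmax :=
  div_nonneg (MDPaux.R_nonneg M) (by linarith [M.γ_lt_one])

lemma MDPaux.normV_le (M : MDP n m) (hr : ∀ i a j, 0 ≤ M.r i a j)
    (V : MDP.Policy n m → Fin n → ℝ) (hV : M.IsValue V) (π : MDP.Policy n m) :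
    ‖V π‖ ≤ M.Vmax := by
  have hγ : 0 < 1 - M.γ := by linarith [M.γ_lt_one]
  have hbound : ∀ i, ‖V π i‖ ≤ ‖M.rPol π‖ + M.γ * ‖V π‖ := by
    intro i
    have h0 := MDPaux.V_nonneg M hr V hV π i
    rw [Real.norm_eq_abs, abs_of_nonneg h0]
    have heq := congrFun (hV π) i
    have hP : (M.P π *ᵥ V π) i ≤ ‖V π‖ :=
      MDPaux.mulVec_le M π (V π) ‖V π‖
        (fun j => le_trans (le_abs_self _) (norm_le_pi_norm (V π) j)) i
    have hrb : M.rPol π i ≤ ‖M.rPol π‖ := by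
      have h := norm_le_pi_norm (M.rPol π) i
      rw [Real.norm_eq_abs] at h
      exact le_trans (le_abs_self _) h
    rw [heq]
    simp only [MDP.Tpol]
    nlinarith [M.γ_pos, mul_le_mul_of_nonneg_left hP (le_of_lt M.γ_pos)]
  have h1 : ‖V π‖ ≤ ‖M.rPol π‖ + M.γ * ‖V π‖ :=
    (pi_norm_le_iff_of_nonneg (add_nonneg (norm_nonneg _)
      (mul_nonneg (le_of_lt M.γ_pos) (norm_nonneg _)))).mpr hbound
  have hb : BddAbove (Set.range fun σ : MDP.Policy n m => ‖M.rPol σ‖) :=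
    Set.Finite.bddAbove (Set.finite_range _)
  have hR : ‖M.rPol π‖ ≤ ⨆ σ : MDP.Policy n m, ‖M.rPol σ‖ := le_ciSup hb π
  rw [MDP.Vmax, le_div_iff₀ hγ]
  nlinarith

lemma MDPaux.V_le_vStar (M : MDP n m) (V : MDP.Policy n m → Fin n → ℝ)
    (σ : MDP.Policy n m) (i : Fin n) : V σ i ≤ M.vStar V i :=
  le_ciSup (Set.Finite.bddAbove (Set.finite_range fun π => V π i)) σ

lemma MDPaux.vStar_le_Vmax (M : MDP n m) (hr : ∀ i a j, 0 ≤ M.r i a j)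
    (V : MDP.Policy n m → Fin n → ℝ) (hV : M.IsValue V) (i : Fin n) :
    M.vStar V i ≤ M.Vmax := by
  haveI := MDPaux.nonemptyPolicy M
  exact ciSup_le fun σ => le_trans
    (by have h := norm_le_pi_norm (V σ) i
        rw [Real.norm_eq_abs] at h
        exact le_trans (le_abs_self _) h) (MDPaux.normV_le M hr V hV σ)

/-- Policy improvement: a greedy step does not decrease the value. -/
lemma MDPaux.improve (M : MDP n m) (V : MDP.Policy n m → Fin n → ℝ) (hV : M.IsValue V)
    (π π' : MDP.Policy n m) (hg : M.Greedy V π π') : ∀ i, V π i ≤ V π' i := by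
  have key := MDPaux.nonneg_of_eq M π' (fun i => V π' i - V π i)
    (fun i => M.T (V π) i - V π i) ?_ ?_
  · intro i
    have h := key i
    linarith
  · intro i
    show 0 ≤ M.T (V π) i - V π i
    have h1 : M.Tpol π (V π) i ≤ M.T (V π) i := MDPaux.Tpol_le_T M π (V π) i
    have h2 := congrFun (hV π) i
    linarith [h2.le, h2.ge]
  · intro i
    show V π' i - V π i =
      (M.T (V π) i - V π i) + M.γ * ((M.P π' *ᵥ fun j => V π' j - V π j) i)
    rw [MDPaux.mulVec_sub M π' (V π') (V π) i]
    have hg' : M.T (V π) i = M.Tpol π' (V π) i := (congrFun hg i).symm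
    have e1 := congrFun (hV π') i
    simp only [MDP.Tpol] at e1 hg'
    rw [hg']
    linear_combination e1

/-- Contraction: one greedy step shrinks the distance to `v_*` by `γ`. -/
lemma MDPaux.contract (M : MDP n m) (V : MDP.Policy n m → Fin n → ℝ) (hV : M.IsValue V)
    (π π' : MDP.Policy n m) (hg : M.Greedy V π π') (i : Fin n) :
    M.vStar V i - V π' i ≤ M.γ * ‖M.vStar V - V π‖ := by
  haveI := MDPaux.nonemptyPolicy M
  have himp := MDPaux.improve M V hV π π' hg
  have key : ∀ σ : MDP.Policy n m, V σ i ≤ M.γ * ‖M.vStar V - V π‖ + V π' i := by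
    intro σ
    have e1 := congrFun (hV σ) i
    have e2 := congrFun (hV π') i
    have hg' : M.Tpol σ (V π) i ≤ M.Tpol π' (V π) i := by
      rw [congrFun hg i]; exact MDPaux.Tpol_le_T M σ (V π) i
    have hsub1 := MDPaux.mulVec_sub M σ (V σ) (V π) i
    have hsub2 := MDPaux.mulVec_sub M π' (V π) (V π') i
    have hb1 : (M.P σ *ᵥ fun j => V σ j - V π j) i ≤ ‖M.vStar V - V π‖ := by
      refine MDPaux.mulVec_le M σ _ _ (fun j => ?_) i
      calc V σ j - V π j ≤ M.vStar V j - V π j := by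
            linarith [MDPaux.V_le_vStar M V σ j]
        _ ≤ ‖M.vStar V - V π‖ := by
            have h := norm_le_pi_norm (M.vStar V - V π) j
            rw [Real.norm_eq_abs, Pi.sub_apply] at h
            exact le_trans (le_abs_self _) h
    have hb2 : (M.P π' *ᵥ fun j => V π j - V π' j) i ≤ 0 :=
      MDPaux.mulVec_le M π' _ 0 (fun j => by linarith [himp j]) i
    simp only [MDP.Tpol] at e1 e2 hg'
    rw [hsub1] at hb1
    rw [hsub2] at hb2
    nlinarith [M.γ_pos, mul_le_mul_of_nonneg_left hb1 (le_of_lt M.γ_pos),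
      mul_le_mul_of_nonneg_left hb2 (le_of_lt M.γ_pos),
      e1.le, e1.ge, e2.le, e2.ge]
  have hsup : M.vStar V i ≤ M.γ * ‖M.vStar V - V π‖ + V π' i := ciSup_le key
  linarith

end Aux

/-- with nonnegative rewards, Howard's PI produces an `ε`-optimal policy
after at most `(1/(1-γ)) log(V_max/ε)` iterations. -/
theorem howard_eps_optimal {n m : ℕ} (M : MDP n m)
    (hr : ∀ i a j, 0 ≤ M.r i a j)
    (V : MDP.Policy n m → Fin n → ℝ) (hV : M.IsValue V)
    (π : ℕ → MDP.Policy n m) (K : ℕ)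
    (hrun : ∀ k < K, ¬ M.IsOptimal V (π k) ∧ M.Greedy V (π k) (π (k + 1)))
    (ε : ℝ) (hε : 0 < ε) (k : ℕ) (hkK : k ≤ K)
    (hk : (1 / (1 - M.γ)) * Real.log (M.Vmax / ε) ≤ (k : ℝ)) :
    ‖M.vStar V - V (π k)‖ ≤ ε := by
  haveI := MDPaux.nonemptyPolicy M
  have hγ1 := M.γ_pos
  have hγ2 := M.γ_lt_one
  have hγ : 0 < 1 - M.γ := by linarith
  have hnn : ∀ (j : ℕ) (i : Fin n), 0 ≤ M.vStar V i - V (π j) i := fun j i => by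
    linarith [MDPaux.V_le_vStar M V (π j) i]
  have key : ∀ j, j ≤ K → ‖M.vStar V - V (π j)‖ ≤ M.γ ^ j * M.Vmax := by
    intro j
    induction j with
    | zero =>
      intro _
      rw [pow_zero, one_mul]
      refine (pi_norm_le_iff_of_nonneg (MDPaux.Vmax_nonneg M)).mpr fun i => ?_
      rw [Pi.sub_apply, Real.norm_eq_abs, abs_of_nonneg (hnn 0 i)]
      have h1 := MDPaux.vStar_le_Vmax M hr V hV i
      have h2 := MDPaux.V_nonneg M hr V hV (π 0) i
      linarith
    | succ j ih =>
      intro hjK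
      have hj : j ≤ K := by omega
      have hgreedy := (hrun j (by omega)).2
      have step : ‖M.vStar V - V (π (j + 1))‖ ≤ M.γ * ‖M.vStar V - V (π j)‖ := by
        refine (pi_norm_le_iff_of_nonneg (mul_nonneg hγ1.le (norm_nonneg _))).mpr fun i => ?_
        rw [Pi.sub_apply, Real.norm_eq_abs, abs_of_nonneg (hnn (j + 1) i)]
        exact MDPaux.contract M V hV (π j) (π (j + 1)) hgreedy i
      calc ‖M.vStar V - V (π (j + 1))‖ ≤ M.γ * ‖M.vStar V - V (π j)‖ := step
        _ ≤ M.γ * (M.γ ^ j * M.Vmax) := mul_le_mul_of_nonneg_left (ih hj) hγ1.le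
        _ = M.γ ^ (j + 1) * M.Vmax := by ring
  have hkey := key k hkK
  by_cases hV0 : M.Vmax ≤ 0
  · have h := mul_le_mul_of_nonneg_left hV0 (pow_nonneg hγ1.le k)
    rw [mul_zero] at h
    linarith
  · push_neg at hV0
    have hlog : Real.log (M.Vmax / ε) ≤ (1 - M.γ) * (k : ℝ) := by
      have h := mul_le_mul_of_nonneg_left hk hγ.le
      rw [← mul_assoc, mul_one_div, div_self (ne_of_gt hγ), one_mul] at h
      exact h
    have hexp : M.Vmax / ε ≤ Real.exp ((1 - M.γ) * (k : ℝ)) := by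
      calc M.Vmax / ε = Real.exp (Real.log (M.Vmax / ε)) :=
            (Real.exp_log (div_pos hV0 hε)).symm
        _ ≤ Real.exp ((1 - M.γ) * (k : ℝ)) := Real.exp_le_exp.mpr hlog
    have hVε : M.Vmax ≤ ε * Real.exp ((1 - M.γ) * (k : ℝ)) := by
      rw [div_le_iff₀ hε] at hexp
      linarith
    have hγk : M.γ ^ k ≤ (Real.exp ((1 - M.γ) * (k : ℝ)))⁻¹ := by
      have h2 : M.γ ≤ Real.exp (M.γ - 1) := by
        linarith [Real.add_one_le_exp (M.γ - 1)]
      rw [show M.γ - 1 = -(1 - M.γ) by ring, Real.exp_neg] at h2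
      calc M.γ ^ k ≤ ((Real.exp (1 - M.γ))⁻¹) ^ k := pow_le_pow_left₀ hγ1.le h2 k
        _ = (Real.exp ((1 - M.γ) * (k : ℝ)))⁻¹ := by
          rw [mul_comm (1 - M.γ) (k : ℝ), Real.exp_nat_mul, inv_pow]
    calc ‖M.vStar V - V (π k)‖ ≤ M.γ ^ k * M.Vmax := hkey
      _ ≤ (Real.exp ((1 - M.γ) * (k : ℝ)))⁻¹ * (ε * Real.exp ((1 - M.γ) * (k : ℝ))) :=
          mul_le_mul hγk hVε hV0.le (inv_nonneg.mpr (Real.exp_pos _).le)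
      _ = ε := by
          rw [mul_comm ε _, ← mul_assoc, inv_mul_cancel₀ (Real.exp_ne_zero _), one_mul]
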